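/- arXiv:1602.05117 — 2 statements merged into one kernel-verified Lean document; each statement's English description precedes it below -/
import Mathlib

section
/- Let a, b, c, d, α, β be positive real numbers such that a ≤ c, b ≤ d, βd ≤ αb, and such that ψ(a+bt) > 0 and ψ(c+dt) > 0 for all t ∈ [0,∞). Then for every t ∈ (1,∞), [ψ(a+bt)]^α/[ψ(c+dt)]^β ≥ [ψ(a+b)]^α/[ψ(c+d)]^β. -/
open Real Filter Set Topology Finset

/-- The digamma (psi) function: logarithmic derivative of the Gamma function. -/
noncomputable def psi (t : ℝ) : ℝ := deriv Real.Gamma t / Real.Gamma t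

lemma ne_neg_nat {x : ℝ} (hx : 0 < x) : ∀ m : ℕ, x ≠ -m := fun m =>
  ne_of_gt (lt_of_le_of_lt (neg_nonpos.mpr m.cast_nonneg) hx)

lemma cne_neg_nat {x : ℝ} (hx : 0 < x) : ∀ m : ℕ, (x:ℂ) ≠ -m := by
  intro m
  simp_rw [← Complex.ofReal_natCast, ← Complex.ofReal_neg, Ne, Complex.ofReal_inj]
  exact ne_neg_nat hx m

lemma analyticAt_CGamma {z : ℂ} (hz : 0 < z.re) : AnalyticAt ℂ Complex.Gamma z := by
  have hS : IsOpen {w : ℂ | 0 < w.re} := isOpen_lt continuous_const Complex.continuous_re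
  refine DifferentiableOn.analyticAt (fun w hw => ?_) (hS.mem_nhds hz)
  refine (Complex.differentiableAt_Gamma w (fun m => ?_)).differentiableWithinAt
  intro h
  rw [h] at hw
  simp only [mem_setOf_eq, Complex.neg_re, Complex.natCast_re] at hw
  have : (0:ℝ) ≤ m := m.cast_nonneg
  linarith

lemma diffAt_deriv_CGamma {z : ℂ} (hz : 0 < z.re) :
    DifferentiableAt ℂ (deriv Complex.Gamma) z := by
  have h2 := (analyticAt_CGamma hz).fderiv
  have hd : DifferentiableAt ℂ (fun w => fderiv ℂ Complex.Gamma w 1) z :=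
    h2.differentiableAt.clm_apply (differentiableAt_const 1)
  have : deriv Complex.Gamma = fun w => fderiv ℂ Complex.Gamma w 1 := by
    funext w; rw [fderiv_apply_one_eq_deriv]
  rw [this]; exact hd

lemma hasDerivAt_RGamma {y : ℝ} (hy : 0 < y) :
    HasDerivAt Real.Gamma ((deriv Complex.Gamma ↑y).re) y := by
  have h := ((Complex.differentiableAt_Gamma ↑y (cne_neg_nat hy)).hasDerivAt).real_of_complex
  have he : (fun x : ℝ => (Complex.Gamma ↑x).re) = Real.Gamma := by
    funext x; rw [Complex.Gamma_ofReal, Complex.ofReal_re]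
  rwa [he] at h

lemma diffAt_deriv_Gamma {x : ℝ} (hx : 0 < x) :
    DifferentiableAt ℝ (deriv Real.Gamma) x := by
  have hEv : deriv Real.Gamma =ᶠ[𝓝 x] fun y : ℝ => (deriv Complex.Gamma ↑y).re := by
    filter_upwards [Ioi_mem_nhds hx] with y hy
    exact (hasDerivAt_RGamma hy).deriv
  rw [hEv.differentiableAt_iff]
  have hz : (0:ℝ) < (x:ℂ).re := by simpa using hx
  exact ((diffAt_deriv_CGamma hz).hasDerivAt.real_of_complex).differentiableAt

lemma diffAt_psi {x : ℝ} (hx : 0 < x) : DifferentiableAt ℝ psi x := by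
  have : psi = fun t => deriv Real.Gamma t / Real.Gamma t := rfl
  rw [this]
  exact (diffAt_deriv_Gamma hx).div (Real.differentiableAt_Gamma (ne_neg_nat hx))
    (Real.Gamma_pos_of_pos hx).ne'

lemma psi_add_one {x : ℝ} (hx : 0 < x) : psi (x + 1) = psi x + 1 / x := by
  have hG := (Real.differentiableAt_Gamma (ne_neg_nat hx)).hasDerivAt
  have h1 : HasDerivAt (fun y : ℝ => Real.Gamma (y + 1))
      (deriv Real.Gamma (x + 1) * 1) x := by
    have hG1 := (Real.differentiableAt_Gamma (ne_neg_nat (by linarith : (0:ℝ) < x + 1))).hasDerivAt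
    exact hG1.comp x ((hasDerivAt_id x).add_const 1)
  have h2 : HasDerivAt (fun y : ℝ => y * Real.Gamma y)
      (1 * Real.Gamma x + x * deriv Real.Gamma x) x := (hasDerivAt_id x).mul hG
  have heq : (fun y : ℝ => Real.Gamma (y + 1)) =ᶠ[𝓝 x] fun y : ℝ => y * Real.Gamma y := by
    filter_upwards [Ioi_mem_nhds hx] with y hy
    exact Real.Gamma_add_one (ne_of_gt hy)
  have h1' := h1.congr_of_eventuallyEq heq.symm
  have hder : deriv Real.Gamma (x + 1) = Real.Gamma x + x * deriv Real.Gamma x := by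
    have := h1'.unique h2; linarith [this]
  have hΓ := (Real.Gamma_pos_of_pos hx).ne'
  have hx0 := hx.ne'
  rw [psi, psi, hder, Real.Gamma_add_one hx0]
  field_simp
  ring

lemma psi_add_nat {x : ℝ} (hx : 0 < x) (N : ℕ) :
    psi (x + N) = psi x + ∑ n ∈ Finset.range N, 1 / (x + n) := by
  induction N with
  | zero => simp
  | succ n ih =>
    have hxn : 0 < x + n := by positivity
    have : x + (n + 1 : ℕ) = (x + n) + 1 := by push_cast; ring
    rw [this, psi_add_one hxn, ih, Finset.sum_range_succ]
    ring

lemma psi_mono {x y : ℝ} (hx : 0 < x) (hxy : x ≤ y) : psi x ≤ psi y := by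
  have hd : ∀ z ∈ Ioi (0:ℝ), DifferentiableAt ℝ (Real.log ∘ Real.Gamma) z := by
    intro z hz
    exact (Real.differentiableAt_Gamma (ne_neg_nat hz)).log (Real.Gamma_pos_of_pos hz).ne'
  have hmono := Real.convexOn_log_Gamma.monotoneOn_deriv hd
  have hder : ∀ z ∈ Ioi (0:ℝ), deriv (Real.log ∘ Real.Gamma) z = psi z := by
    intro z hz
    have := ((Real.differentiableAt_Gamma (ne_neg_nat hz)).hasDerivAt.log
      (Real.Gamma_pos_of_pos hz).ne')
    exact this.deriv
  have hy : y ∈ Ioi (0:ℝ) := lt_of_lt_of_le hx hxy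
  have := hmono hx hy hxy
  rwa [hder x hx, hder y hy] at this

lemma psi_sub_tendsto {x y : ℝ} (hx : 0 < x) (hxy : x ≤ y) :
    Tendsto (fun N : ℕ => ∑ n ∈ Finset.range N, (1 / (x + n) - 1 / (y + n)))
      atTop (𝓝 (psi y - psi x)) := by
  have hy : 0 < y := lt_of_lt_of_le hx hxy
  set m : ℕ := ⌈y - x⌉₊ with hm
  have hym : y ≤ x + m := by
    have := Nat.le_ceil (y - x); linarith
  have htail : Tendsto (fun N : ℕ => psi (y + N) - psi (x + N)) atTop (𝓝 0) := by
    have hub : ∀ N : ℕ, psi (y + N) - psi (x + N) ≤ (m : ℝ) / (x + N) := by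
      intro N
      have hxN : (0:ℝ) < x + N := by positivity
      have h1 : psi (y + N) ≤ psi ((x + N) + m) := by
        apply psi_mono (by positivity); linarith
      have h2 := psi_add_nat hxN m
      have h3 : ∑ n ∈ Finset.range m, 1 / ((x + N) + n) ≤ (m : ℝ) / (x + N) := by
        have hterm : ∀ n ∈ Finset.range m, 1 / ((x + N) + n) ≤ 1 / (x + N) := by
          intro n _
          apply one_div_le_one_div_of_le hxN
          have : (0:ℝ) ≤ n := n.cast_nonneg
          linarith
        calc ∑ n ∈ Finset.range m, 1 / ((x + N) + n) ≤ ∑ _n ∈ Finset.range m, 1 / (x + N) :=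
              Finset.sum_le_sum hterm
          _ = (m : ℝ) / (x + N) := by rw [Finset.sum_const, Finset.card_range]; ring
      linarith
    have hlb : ∀ N : ℕ, (0:ℝ) ≤ psi (y + N) - psi (x + N) := by
      intro N
      have := psi_mono (by positivity : (0:ℝ) < x + N) (by linarith : x + N ≤ y + N)
      linarith
    have hub0 : Tendsto (fun N : ℕ => (m : ℝ) / (x + N)) atTop (𝓝 0) := by
      apply Tendsto.div_atTop tendsto_const_nhds
      exact tendsto_atTop_add_const_left _ x tendsto_natCast_atTop_atTop
    exact squeeze_zero hlb hub hub0
  have hmain := (tendsto_const_nhds : Tendsto (fun _ : ℕ => psi y - psi x) atTop (𝓝 (psi y - psi x))).sub htail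
  rw [sub_zero] at hmain
  refine hmain.congr (fun N => ?_)
  rw [Finset.sum_sub_distrib]
  have h1 := psi_add_nat hx N
  have h2 := psi_add_nat hy N
  linarith

lemma psi_diff_le {x y h : ℝ} (hx : 0 < x) (hxy : x ≤ y) (hh : 0 ≤ h) :
    psi (y + h) - psi y ≤ psi (x + h) - psi x := by
  have hy : 0 < y := lt_of_lt_of_le hx hxy
  refine le_of_tendsto_of_tendsto' (psi_sub_tendsto hy (by linarith : y ≤ y + h))
    (psi_sub_tendsto hx (by linarith : x ≤ x + h)) (fun N => ?_)
  apply Finset.sum_le_sum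
  intro n _
  have hn : (0:ℝ) ≤ n := n.cast_nonneg
  have hxn : (0:ℝ) < x + n := by positivity
  have hyn : (0:ℝ) < y + n := by linarith
  have e1 : 1 / (y + n) - 1 / (y + h + n) = h / ((y + n) * (y + h + n)) := by
    rw [div_sub_div _ _ hyn.ne' (by linarith : (y + h + n) ≠ 0)]
    ring_nf
  have e2 : 1 / (x + n) - 1 / (x + h + n) = h / ((x + n) * (x + h + n)) := by
    rw [div_sub_div _ _ hxn.ne' (by linarith : (x + h + n) ≠ 0)]
    ring_nf
  have : y + n + h = y + h + n := by ring
  calc 1 / (y + n) - 1 / (y + h + n) = h / ((y + n) * (y + h + n)) := e1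
    _ ≤ h / ((x + n) * (x + h + n)) := by
        apply div_le_div_of_nonneg_left hh (by positivity)
        nlinarith
    _ = 1 / (x + n) - 1 / (x + h + n) := e2.symm

lemma tendsto_slope_right {f : ℝ → ℝ} {f' x : ℝ} (hf : HasDerivAt f f' x) :
    Tendsto (fun h : ℝ => (f (x + h) - f x) / h) (𝓝[>] (0:ℝ)) (𝓝 f') := by
  have h1 := hasDerivAt_iff_tendsto_slope.mp hf
  have h2 : Tendsto (fun h : ℝ => x + h) (𝓝[>] (0:ℝ)) (𝓝[≠] x) := by
    apply tendsto_nhdsWithin_of_tendsto_nhds_of_eventually_within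
    · have : Tendsto (fun h : ℝ => x + h) (𝓝 0) (𝓝 x) := by
        simpa using (continuous_add_left x).tendsto (0:ℝ)
      exact this.mono_left nhdsWithin_le_nhds
    · filter_upwards [self_mem_nhdsWithin] with h (hh : 0 < h)
      simp only [mem_compl_iff, mem_singleton_iff]
      intro hcontra
      nlinarith [hcontra]
  have h3 := h1.comp h2
  refine h3.congr (fun h => ?_)
  simp only [Function.comp_apply, slope_def_field]
  rw [add_sub_cancel_left]

lemma deriv_psi_nonneg {x : ℝ} (hx : 0 < x) : 0 ≤ deriv psi x := by
  refine ge_of_tendsto (tendsto_slope_right (diffAt_psi hx).hasDerivAt) ?_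
  filter_upwards [self_mem_nhdsWithin] with h (hh : 0 < h)
  have h2 := psi_mono hx (by linarith : x ≤ x + h)
  apply div_nonneg (by linarith) hh.le

lemma deriv_psi_anti {x y : ℝ} (hx : 0 < x) (hxy : x ≤ y) : deriv psi y ≤ deriv psi x := by
  have hy : 0 < y := lt_of_lt_of_le hx hxy
  refine le_of_tendsto_of_tendsto (tendsto_slope_right (diffAt_psi hy).hasDerivAt)
    (tendsto_slope_right (diffAt_psi hx).hasDerivAt) ?_
  filter_upwards [self_mem_nhdsWithin] with h (hh : 0 < h)
  exact div_le_div_of_nonneg_right (psi_diff_le hx hxy hh.le) hh.le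

theorem U_lower_bound_gt_one (a b c d α β : ℝ) (ha : 0 < a) (hb : 0 < b) (hc : 0 < c)
    (hd : 0 < d) (hα : 0 < α) (hβ : 0 < β) (hac : a ≤ c) (hbd : b ≤ d)
    (hβdαb : β * d ≤ α * b)
    (hpos : ∀ t : ℝ, 0 ≤ t → 0 < psi (a + b * t) ∧ 0 < psi (c + d * t))
    (t : ℝ) (ht : t ∈ Set.Ioi (1 : ℝ)) :
    psi (a + b * t) ^ α / psi (c + d * t) ^ β ≥ psi (a + b) ^ α / psi (c + d) ^ β := by
  rw [Set.mem_Ioi] at ht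
  set F : ℝ → ℝ := fun s => α * Real.log (psi (a + b * s)) - β * Real.log (psi (c + d * s))
    with hF
  -- derivative of F at each s ≥ 1
  have hder : ∀ s : ℝ, 1 ≤ s → HasDerivAt F
      (α * (deriv psi (a + b * s) * (b * 1) / psi (a + b * s))
        - β * (deriv psi (c + d * s) * (d * 1) / psi (c + d * s))) s := by
    intro s hs
    have hs0 : (0:ℝ) ≤ s := by linarith
    have hu : 0 < a + b * s := by nlinarith
    have hv : 0 < c + d * s := by nlinarith
    obtain ⟨pu, pv⟩ := hpos s hs0
    have h1 : HasDerivAt (fun s : ℝ => a + b * s) (b * 1) s :=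
      ((hasDerivAt_id s).const_mul b).const_add a
    have h2 : HasDerivAt (fun s : ℝ => c + d * s) (d * 1) s :=
      ((hasDerivAt_id s).const_mul d).const_add c
    have h3 : HasDerivAt (fun s : ℝ => psi (a + b * s)) (deriv psi (a + b * s) * (b * 1)) s :=
      by have := (diffAt_psi hu).hasDerivAt.comp s h1; exact this
    have h4 : HasDerivAt (fun s : ℝ => psi (c + d * s)) (deriv psi (c + d * s) * (d * 1)) s :=
      by have := (diffAt_psi hv).hasDerivAt.comp s h2; exact this
    exact ((h3.log pu.ne').const_mul α).sub ((h4.log pv.ne').const_mul β)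
  have hmono : MonotoneOn F (Ici (1:ℝ)) := by
    apply monotoneOn_of_deriv_nonneg (convex_Ici 1)
    · intro s hs
      exact ((hder s hs).continuousAt).continuousWithinAt
    · intro s hs
      rw [interior_Ici] at hs
      exact ((hder s hs.le).differentiableAt).differentiableWithinAt
    · intro s hs
      rw [interior_Ici] at hs
      have hs1 : (1:ℝ) ≤ s := hs.le
      rw [(hder s hs1).deriv]
      have hs0 : (0:ℝ) ≤ s := by linarith
      have hu : 0 < a + b * s := by nlinarith
      have hv : 0 < c + d * s := by nlinarith
      have huv : a + b * s ≤ c + d * s := by nlinarith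
      obtain ⟨pu, pv⟩ := hpos s hs0
      have hpupv : psi (a + b * s) ≤ psi (c + d * s) := psi_mono hu huv
      have hdvdu : deriv psi (c + d * s) ≤ deriv psi (a + b * s) := deriv_psi_anti hu huv
      have hdv0 : 0 ≤ deriv psi (c + d * s) := deriv_psi_nonneg hv
      set du := deriv psi (a + b * s)
      set dv := deriv psi (c + d * s)
      set PU := psi (a + b * s)
      set PV := psi (c + d * s)
      rw [sub_nonneg]
      have e1 : β * (dv * (d * 1) / PV) = (β * (dv * d)) / PV := by ring
      have e2 : α * (du * (b * 1) / PU) = (α * (du * b)) / PU := by ring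
      rw [e1, e2, div_le_div_iff₀ pv pu]
      have k1 : dv * PU ≤ du * PV :=
        mul_le_mul hdvdu hpupv pu.le (le_trans hdv0 hdvdu)
      have k2 : (β * d) * (dv * PU) ≤ (α * b) * (du * PV) :=
        mul_le_mul hβdαb k1 (mul_nonneg hdv0 pu.le) (by positivity)
      nlinarith [k2]
  have hF1t : F 1 ≤ F t := hmono (by simp) (by simp [Set.mem_Ici]; linarith) ht.le
  have hexp : ∀ s : ℝ, 0 ≤ s →
      psi (a + b * s) ^ α / psi (c + d * s) ^ β = Real.exp (F s) := by
    intro s hs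
    obtain ⟨p1, p2⟩ := hpos s hs
    rw [Real.rpow_def_of_pos p1, Real.rpow_def_of_pos p2, ← Real.exp_sub]
    congr 1
    simp only [hF]
    ring
  have h1 : a + b = a + b * 1 := by ring
  have h2 : c + d = c + d * 1 := by ring
  rw [h1, h2, hexp t (by linarith), hexp 1 (by norm_num)]
  exact Real.exp_le_exp.mpr hF1t
end

section
/- Let m be a positive odd integer and let α, β be real numbers with 0 < α ≤ β. Then for every t ∈ [0,1], ψ^(m)(α)/ψ^(m)(β) ≥ ψ^(m)(α+t)/ψ^(m)(β+t) ≥ ψ^(m)(α+1)/ψ^(m)(β+1). -/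
set_option maxHeartbeats 1000000
open Real Filter Topology Set

noncomputable def G (M : ℕ) (x : ℝ) : ℝ := ∑' n : ℕ, 1 / ((n : ℝ) + x) ^ M

lemma term_pos {M : ℕ} {x : ℝ} (hx : 0 < x) (n : ℕ) : 0 < 1 / ((n : ℝ) + x) ^ M := by
  have : (0:ℝ) < (n:ℝ) + x := by positivity
  positivity

lemma summable_G {M : ℕ} (hM : 2 ≤ M) {x : ℝ} (hx : 0 < x) :
    Summable (fun n : ℕ => 1 / ((n : ℝ) + x) ^ M) := by
  have base : Summable (fun n : ℕ => 1 / ((n : ℝ) + 1) ^ 2) := by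
    have := (summable_nat_add_iff (f := fun n : ℕ => 1 / (n : ℝ) ^ 2) 1).2
      (summable_one_div_nat_pow.2 one_lt_two)
    simpa using this
  set c : ℝ := min 1 x with hc
  have hc0 : 0 < c := lt_min one_pos hx
  refine Summable.of_nonneg_of_le (fun n => (term_pos hx n).le)
    (f := fun n : ℕ => (1 / c ^ M) * (1 / ((n : ℝ) + 1) ^ 2)) ?_ (base.mul_left _)
  intro n
  have h1 : ((n : ℝ) + 1) * c ≤ (n : ℝ) + x := by
    rcases le_total x 1 with h | h
    · have hcx : c = x := min_eq_right h
      rw [hcx]; nlinarith [Nat.cast_nonneg (α := ℝ) n]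
    · have hcx : c = 1 := min_eq_left h
      rw [hcx]; nlinarith [Nat.cast_nonneg (α := ℝ) n]
  have hn1 : (0:ℝ) < (n : ℝ) + 1 := by positivity
  have hnx : (0:ℝ) < (n : ℝ) + x := by positivity
  have h2 : ((n : ℝ) + 1) ^ 2 * c ^ M ≤ ((n : ℝ) + x) ^ M := by
    calc ((n : ℝ) + 1) ^ 2 * c ^ M ≤ ((n : ℝ) + 1) ^ M * c ^ M := by
          have : ((n : ℝ) + 1) ^ 2 ≤ ((n : ℝ) + 1) ^ M :=
            pow_le_pow_right₀ (by nlinarith [Nat.cast_nonneg (α := ℝ) n]) hM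
          nlinarith [pow_pos hc0 M]
    _ = (((n : ℝ) + 1) * c) ^ M := (mul_pow _ _ _).symm
    _ ≤ ((n : ℝ) + x) ^ M := by gcongr <;> positivity
  simp only [div_mul_div_comm, one_mul]
  apply one_div_le_one_div_of_le (by positivity)
  calc c ^ M * ((n : ℝ) + 1) ^ 2 = ((n : ℝ) + 1) ^ 2 * c ^ M := by ring
  _ ≤ ((n : ℝ) + x) ^ M := h2

lemma G_pos {M : ℕ} (hM : 2 ≤ M) {x : ℝ} (hx : 0 < x) : 0 < G M x :=
  Summable.tsum_pos (summable_G hM hx) (fun n => (term_pos hx n).le) 0 (term_pos hx 0)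

lemma hasDerivAt_term (M : ℕ) (n : ℕ) {y : ℝ} (hy : 0 < y) :
    HasDerivAt (fun z => 1 / ((n : ℝ) + z) ^ M) (-(M : ℝ) / ((n : ℝ) + y) ^ (M + 1)) y := by
  have hny : (0:ℝ) < (n : ℝ) + y := by positivity
  have h1 : HasDerivAt (fun z : ℝ => (n : ℝ) + z) 1 y := (hasDerivAt_id y).const_add _
  have h2 : HasDerivAt (fun z : ℝ => ((n : ℝ) + z) ^ M)
      ((M : ℝ) * ((n : ℝ) + y) ^ (M - 1) * 1) y := h1.pow M
  have h3 := h2.fun_inv (by positivity)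
  have heq : -((M : ℝ) * ((n : ℝ) + y) ^ (M - 1) * 1) / (((n : ℝ) + y) ^ M) ^ 2
      = -(M : ℝ) / ((n : ℝ) + y) ^ (M + 1) := by
    rcases Nat.eq_zero_or_pos M with hM | hM
    · subst hM; simp
    · rw [div_eq_div_iff (by positivity) (by positivity)]
      have h4 : ((n:ℝ)+y)^(M-1) * ((n:ℝ)+y)^(M+1) = (((n:ℝ)+y)^M)^2 := by
        rw [← pow_add, ← pow_mul]; congr 1; omega
      linear_combination (-(M:ℝ)) * h4
  rw [← heq]
  simpa [one_div] using h3

lemma hasDerivAt_G {M : ℕ} (hM : 2 ≤ M) {x : ℝ} (hx : 0 < x) :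
    HasDerivAt (G M) (-(M : ℝ) * G (M + 1) x) x := by
  have hx2 : 0 < x / 2 := by positivity
  have hxs : x ∈ Ioi (x / 2) := by simp only [mem_Ioi]; linarith
  have hu : Summable (fun n : ℕ => (M : ℝ) / ((n : ℝ) + x / 2) ^ (M + 1)) := by
    simpa [mul_one_div, div_eq_mul_inv] using (summable_G (by omega) hx2).mul_left (M : ℝ)
  have key : HasDerivAt (G M)
      ((fun y => ∑' n : ℕ, (-(M:ℝ) / ((n : ℝ) + y) ^ (M + 1))) x) x := by
    apply hasDerivAt_of_tendstoUniformlyOn (f := fun N y =>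
        ∑ n ∈ Finset.range N, 1 / ((n : ℝ) + y) ^ M)
      (f' := fun N y => ∑ n ∈ Finset.range N, (-(M:ℝ) / ((n : ℝ) + y) ^ (M + 1)))
      (l := atTop) isOpen_Ioi _ _ _ hxs
    · apply tendstoUniformlyOn_tsum_nat hu
      intro n y hy
      have h1 : x / 2 < y := hy
      have h2 : (0:ℝ) < (n:ℝ) + x / 2 := by positivity
      have h3 : (0:ℝ) < (n:ℝ) + y := by linarith
      rw [norm_div, Real.norm_eq_abs, Real.norm_eq_abs, abs_neg,
        abs_of_nonneg (Nat.cast_nonneg (α := ℝ) M), abs_of_nonneg (by positivity : (0:ℝ) ≤ ((n:ℝ)+y)^(M+1))]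
      gcongr
    · filter_upwards with N y hy
      exact HasDerivAt.fun_sum (fun n _ => hasDerivAt_term M n (lt_trans hx2 hy))
    · intro y hy
      exact (summable_G hM (lt_trans hx2 hy)).hasSum.tendsto_sum_nat
  have heq : (∑' n : ℕ, (-(M:ℝ) / ((n : ℝ) + x) ^ (M + 1))) = -(M : ℝ) * G (M + 1) x := by
    rw [G, ← tsum_mul_left]
    congr 1; funext n; rw [mul_one_div, neg_div]
  simpa only [heq] using key

local notation "γ" => Real.eulerMascheroniConstant

noncomputable def D (x : ℝ) : ℝ := deriv (Real.log ∘ Real.Gamma) x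

lemma Gamma_diff {x : ℝ} (hx : 0 < x) : DifferentiableAt ℝ Real.Gamma x :=
  Real.differentiableAt_Gamma (fun m => ((neg_nonpos.mpr (Nat.cast_nonneg m)).trans_lt hx).ne')

lemma logGamma_diff {x : ℝ} (hx : 0 < x) : DifferentiableAt ℝ (Real.log ∘ Real.Gamma) x :=
  (Gamma_diff hx).log (Real.Gamma_pos_of_pos hx).ne'

lemma psi_eq_D {x : ℝ} (hx : 0 < x) : psi x = D x := by
  rw [D, Function.comp_def, deriv.log (Gamma_diff hx) (Real.Gamma_pos_of_pos hx).ne', psi]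

lemma logGamma_rec {x : ℝ} (hx : 0 < x) :
    (Real.log ∘ Real.Gamma) (x + 1) = (Real.log ∘ Real.Gamma) x + Real.log x := by
  simp only [Function.comp_apply, Real.Gamma_add_one hx.ne',
    Real.log_mul hx.ne' (Real.Gamma_pos_of_pos hx).ne']
  ring

lemma D_rec {x : ℝ} (hx : 0 < x) : D (x + 1) = D x + 1 / x := by
  simp only [D]
  rw [← deriv_comp_add_const, one_div, ← Real.deriv_log,
    ← deriv_add (logGamma_diff hx) (Real.differentiableAt_log hx.ne')]
  apply Filter.EventuallyEq.deriv_eq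
  filter_upwards [eventually_gt_nhds hx] using fun y hy => logGamma_rec hy

lemma D_mono {x y : ℝ} (hx : 0 < x) (hxy : x ≤ y) : D x ≤ D y := by
  rcases eq_or_lt_of_le hxy with rfl | hlt
  · exact le_refl _
  have hc := Real.convexOn_log_Gamma
  have hy : 0 < y := hx.trans hlt
  calc D x ≤ slope (Real.log ∘ Real.Gamma) x y :=
        hc.deriv_le_slope (mem_Ioi.2 hx) (mem_Ioi.2 hy) hlt (logGamma_diff hx)
  _ ≤ D y := hc.slope_le_deriv (mem_Ioi.2 hx) (mem_Ioi.2 hy) hlt (logGamma_diff hy)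

lemma D_one : D 1 = -γ := by
  rw [← psi_eq_D one_pos, psi, Real.Gamma_one, div_one,
    Real.eulerMascheroniConstant_eq_neg_deriv, neg_neg]

noncomputable def H (N : ℕ) : ℝ := ∑ k ∈ Finset.range N, 1 / ((k : ℝ) + 1)

lemma D_nat (N : ℕ) : D ((N : ℝ) + 1) = -γ + H N := by
  induction N with
  | zero => simp [H, D_one]
  | succ N ih =>
    have h1 : ((N : ℝ) + 1) + 1 = ((N + 1 : ℕ) : ℝ) + 1 := by push_cast; ring
    rw [← h1, D_rec (by positivity), ih]
    simp only [H, Finset.sum_range_succ]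
    push_cast; ring

lemma D_add_nat {x : ℝ} (hx : 0 < x) (N : ℕ) :
    D (x + N) = D x + ∑ k ∈ Finset.range N, 1 / (x + k) := by
  induction N with
  | zero => simp
  | succ N ih =>
    have h1 : x + ((N + 1 : ℕ) : ℝ) = (x + N) + 1 := by push_cast; ring
    rw [h1, D_rec (by positivity), ih, Finset.sum_range_succ]
    push_cast; ring

lemma summable_ser {x : ℝ} (hx : 0 < x) :
    Summable (fun n : ℕ => 1 / ((n : ℝ) + 1) - 1 / ((n : ℝ) + x)) := by
  have base : Summable (fun n : ℕ => 1 / ((n : ℝ) + 1) ^ 2) := by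
    have := (summable_nat_add_iff (f := fun n : ℕ => 1 / (n : ℝ) ^ 2) 1).2
      (summable_one_div_nat_pow.2 one_lt_two)
    simpa using this
  set c : ℝ := min 1 x with hc
  have hc0 : 0 < c := lt_min one_pos hx
  apply Summable.of_abs
  refine Summable.of_nonneg_of_le (fun n => abs_nonneg _)
    (f := fun n : ℕ => (|x - 1| / c) * (1 / ((n : ℝ) + 1) ^ 2)) ?_ (base.mul_left _)
  intro n
  have hn1 : (0:ℝ) < (n : ℝ) + 1 := by positivity
  have hnx : (0:ℝ) < (n : ℝ) + x := by positivity
  have h1 : ((n : ℝ) + 1) * c ≤ (n : ℝ) + x := by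
    rcases le_total x 1 with h | h
    · have hcx : c = x := min_eq_right h
      rw [hcx]; nlinarith [Nat.cast_nonneg (α := ℝ) n]
    · have hcx : c = 1 := min_eq_left h
      rw [hcx]; nlinarith [Nat.cast_nonneg (α := ℝ) n]
  have heq : 1 / ((n : ℝ) + 1) - 1 / ((n : ℝ) + x) = (x - 1) / (((n:ℝ) + 1) * ((n:ℝ) + x)) := by
    field_simp
    ring
  rw [heq, abs_div, abs_of_pos (show (0:ℝ) < ((n:ℝ)+1)*((n:ℝ)+x) by positivity)]
  show |x - 1| / (((n:ℝ)+1)*((n:ℝ)+x)) ≤ |x - 1| / c * (1 / ((n:ℝ)+1)^2)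
  rw [div_mul_div_comm, mul_one]
  exact div_le_div_of_nonneg_left (abs_nonneg _) (by positivity) (by nlinarith)

lemma psi_series {x : ℝ} (hx : 0 < x) :
    psi x = -γ + ∑' n : ℕ, (1 / ((n : ℝ) + 1) - 1 / ((n : ℝ) + x)) := by
  have hS : ∀ N : ℕ, ∑ k ∈ Finset.range N, (1 / ((k : ℝ) + 1) - 1 / ((k : ℝ) + x))
      = γ + D x + (D ((N:ℝ) + 1) - D (x + N)) := by
    intro N
    rw [Finset.sum_sub_distrib, D_nat, D_add_nat hx]
    have h0 : ∑ k ∈ Finset.range N, 1 / ((k:ℝ) + x) = ∑ k ∈ Finset.range N, 1 / (x + (k:ℝ)) := by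
      apply Finset.sum_congr rfl; intros; rw [add_comm]
    rw [h0]
    simp only [H]
    ring
  set c : ℕ := ⌈x⌉₊ with hcdef
  have hxc : x ≤ c := Nat.le_ceil x
  have hc0 : 0 < c := Nat.ceil_pos.mpr hx
  have hc1 : (1:ℝ) ≤ c := by exact_mod_cast hc0
  have herr : ∀ N : ℕ, 1 ≤ N → |D ((N:ℝ) + 1) - D (x + N)| ≤ (c:ℝ) / N := by
    intro N hN
    have hN0 : (0:ℝ) < N := by exact_mod_cast hN
    have hDN : D ((N:ℝ) + (c:ℝ)) = D N + ∑ k ∈ Finset.range c, 1 / ((N:ℝ) + k) := by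
      exact_mod_cast D_add_nat hN0 c
    have hsum : ∑ k ∈ Finset.range c, 1 / ((N:ℝ) + k) ≤ (c:ℝ) / N := by
      calc ∑ k ∈ Finset.range c, 1/((N:ℝ)+k) ≤ ∑ _k ∈ Finset.range c, 1/(N:ℝ) := by
            apply Finset.sum_le_sum; intro k _
            exact one_div_le_one_div_of_le hN0 (le_add_of_nonneg_right (Nat.cast_nonneg k))
      _ = (c:ℝ)/N := by rw [Finset.sum_const, Finset.card_range, nsmul_eq_mul, mul_one_div]
    have b1 : D (N:ℝ) ≤ D ((N:ℝ)+1) := D_mono hN0 (by linarith)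
    have b2 : D ((N:ℝ)+1) ≤ D ((N:ℝ)+c) := D_mono (by linarith) (by linarith)
    have b3 : D (N:ℝ) ≤ D (x + N) := by
      have := D_mono hN0 (le_add_of_nonneg_left hx.le); simpa using this
    have b4 : D (x + N) ≤ D ((N:ℝ)+c) := D_mono (by linarith) (by linarith)
    rw [abs_sub_le_iff]
    constructor <;> linarith
  have herr0 : Filter.Tendsto (fun N : ℕ => D ((N:ℝ) + 1) - D (x + N)) atTop (𝓝 0) := by
    apply squeeze_zero_norm' _ (tendsto_const_div_atTop_nhds_zero_nat (c:ℝ))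
    filter_upwards [Filter.eventually_ge_atTop 1] with N hN using herr N hN
  have hlim : Filter.Tendsto
      (fun N : ℕ => ∑ k ∈ Finset.range N, (1 / ((k : ℝ) + 1) - 1 / ((k : ℝ) + x)))
      atTop (𝓝 (γ + D x)) := by
    simp only [hS]
    simpa using (tendsto_const_nhds (x := γ + D x) (f := atTop)).add herr0
  have h2 := (summable_ser hx).hasSum.tendsto_sum_nat
  have h3 : ∑' n : ℕ, (1 / ((n : ℝ) + 1) - 1 / ((n : ℝ) + x)) = γ + D x :=
    tendsto_nhds_unique h2 hlim
  rw [h3, psi_eq_D hx]; ring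

lemma hasDerivAt_ser {x : ℝ} (hx : 0 < x) :
    HasDerivAt (fun y => ∑' n : ℕ, (1 / ((n : ℝ) + 1) - 1 / ((n : ℝ) + y))) (G 2 x) x := by
  have hx2 : 0 < x / 2 := by positivity
  have hxs : x ∈ Ioi (x / 2) := by simp only [mem_Ioi]; linarith
  have hu : Summable (fun n : ℕ => 1 / ((n : ℝ) + x / 2) ^ 2) := summable_G le_rfl hx2
  have key : HasDerivAt (fun y => ∑' n : ℕ, (1 / ((n : ℝ) + 1) - 1 / ((n : ℝ) + y)))
      ((fun y => ∑' n : ℕ, 1 / ((n : ℝ) + y) ^ 2) x) x := by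
    apply hasDerivAt_of_tendstoUniformlyOn (f := fun N y =>
        ∑ n ∈ Finset.range N, (1 / ((n : ℝ) + 1) - 1 / ((n : ℝ) + y)))
      (f' := fun N y => ∑ n ∈ Finset.range N, 1 / ((n : ℝ) + y) ^ 2)
      (l := atTop) isOpen_Ioi _ _ _ hxs
    · apply tendstoUniformlyOn_tsum_nat hu
      intro n y hy
      have h1 : x / 2 < y := hy
      have h2 : (0:ℝ) < (n:ℝ) + x / 2 := by positivity
      have h3 : (0:ℝ) < (n:ℝ) + y := by linarith
      rw [Real.norm_eq_abs, abs_of_nonneg (by positivity)]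
      gcongr
    · filter_upwards with N y hy
      apply HasDerivAt.fun_sum
      intro n _
      have hy0 : 0 < y := lt_trans hx2 hy
      have ht := (hasDerivAt_term 1 n hy0).const_sub (1 / ((n : ℝ) + 1))
      simpa [neg_div] using ht
    · intro y hy
      exact (summable_ser (lt_trans hx2 hy)).hasSum.tendsto_sum_nat
  exact key

lemma hasDerivAt_psi {x : ℝ} (hx : 0 < x) : HasDerivAt psi (G 2 x) x := by
  have h1 : HasDerivAt (fun y => -γ + ∑' n : ℕ, (1 / ((n : ℝ) + 1) - 1 / ((n : ℝ) + y)))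
      (G 2 x) x := (hasDerivAt_ser hx).const_add _
  apply h1.congr_of_eventuallyEq
  exact Filter.eventuallyEq_of_mem (Ioi_mem_nhds hx) (fun y hy => psi_series hy)

lemma iteratedDeriv_psi (m : ℕ) (hm : 1 ≤ m) : ∀ x : ℝ, 0 < x →
    iteratedDeriv m psi x = (-1) ^ (m + 1) * (m.factorial : ℝ) * G (m + 1) x := by
  induction m, hm using Nat.le_induction with
  | base =>
    intro x hx
    rw [iteratedDeriv_one, (hasDerivAt_psi hx).deriv]
    norm_num
  | succ m hm ih =>
    intro x hx
    rw [iteratedDeriv_succ]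
    have hev : iteratedDeriv m psi =ᶠ[𝓝 x]
        fun y => (-1)^(m+1) * (m.factorial:ℝ) * G (m+1) y :=
      Filter.eventuallyEq_of_mem (Ioi_mem_nhds hx) (fun y hy => ih y hy)
    rw [hev.deriv_eq]
    have hG := ((hasDerivAt_G (M := m+1) (by omega) hx).const_mul
      ((-1:ℝ)^(m+1) * (m.factorial:ℝ))).deriv
    rw [hG]
    push_cast [Nat.factorial_succ]
    ring

lemma alg (M : ℕ) {p1 p2 q1 q2 : ℝ} (hq1 : 0 < q1) (hq2 : 0 < q2)
    (h11 : q1 ≤ p1) (h22 : q2 ≤ p2) (h21 : p2 ≤ p1) (hq21 : q2 ≤ q1)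
    (hcross : p2 * q1 ≤ p1 * q2) :
    p1 ^ M * q2 ^ (M+1) + p2 ^ M * q1 ^ (M+1) ≤ p1 ^ (M+1) * q2 ^ M + p2 ^ (M+1) * q1 ^ M := by
  have hp2 : 0 < p2 := lt_of_lt_of_le hq2 h22
  have hA : (p2*q1)^M ≤ (p1*q2)^M := pow_le_pow_left₀ (by positivity) hcross M
  have e1 : p1 ^ (M+1) * q2 ^ M = (p1*q2)^M * p1 := by rw [pow_succ, mul_pow]; ring
  have e2 : p1 ^ M * q2 ^ (M+1) = (p1*q2)^M * q2 := by rw [pow_succ, mul_pow]; ring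
  have e3 : p2 ^ (M+1) * q1 ^ M = (p2*q1)^M * p2 := by rw [pow_succ, mul_pow]; ring
  have e4 : p2 ^ M * q1 ^ (M+1) = (p2*q1)^M * q1 := by rw [pow_succ, mul_pow]; ring
  rw [e1, e2, e3, e4]
  have hB0 : (0:ℝ) ≤ (p2*q1)^M := by positivity
  have h1 : (p2*q1)^M * (p1-q2) ≤ (p1*q2)^M * (p1-q2) :=
    mul_le_mul_of_nonneg_right hA (by linarith)
  have h2 : (0:ℝ) ≤ (p2*q1)^M * ((p1-q2)+(p2-q1)) := mul_nonneg hB0 (by linarith)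
  nlinarith [h1, h2]

lemma pair_ineq_aux (M : ℕ) {x y : ℝ} (hx : 0 < x) (hxy : x ≤ y) {n k : ℕ} (hnk : n ≤ k) :
    1/((n:ℝ)+x)^M * (1/((k:ℝ)+y)^(M+1)) + 1/((k:ℝ)+x)^M * (1/((n:ℝ)+y)^(M+1))
      ≤ 1/((n:ℝ)+x)^(M+1) * (1/((k:ℝ)+y)^M) + 1/((k:ℝ)+x)^(M+1) * (1/((n:ℝ)+y)^M) := by
  have hnx : (0:ℝ) < (n:ℝ) + x := by positivity
  have hkx : (0:ℝ) < (k:ℝ) + x := by positivity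
  have hny : (0:ℝ) < (n:ℝ) + y := by linarith
  have hky : (0:ℝ) < (k:ℝ) + y := by linarith
  have hnk' : (n:ℝ) ≤ (k:ℝ) := Nat.cast_le.mpr hnk
  have key := alg M (p1 := 1/((n:ℝ)+x)) (p2 := 1/((k:ℝ)+x))
    (q1 := 1/((n:ℝ)+y)) (q2 := 1/((k:ℝ)+y))
    (by positivity) (by positivity)
    (one_div_le_one_div_of_le hnx (by linarith))
    (one_div_le_one_div_of_le hkx (by linarith))
    (one_div_le_one_div_of_le hnx (by linarith))
    (one_div_le_one_div_of_le hny (by linarith))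
    (by rw [div_mul_div_comm, div_mul_div_comm, one_mul]
        apply one_div_le_one_div_of_le (by positivity)
        nlinarith)
  simpa only [one_div, inv_pow] using key

lemma pair_ineq (M : ℕ) {x y : ℝ} (hx : 0 < x) (hxy : x ≤ y) (n k : ℕ) :
    1/((n:ℝ)+x)^M * (1/((k:ℝ)+y)^(M+1)) + 1/((k:ℝ)+x)^M * (1/((n:ℝ)+y)^(M+1))
      ≤ 1/((n:ℝ)+x)^(M+1) * (1/((k:ℝ)+y)^M) + 1/((k:ℝ)+x)^(M+1) * (1/((n:ℝ)+y)^M) := by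
  rcases le_total n k with h | h
  · exact pair_ineq_aux M hx hxy h
  · have := pair_ineq_aux M hx hxy h
    linarith

lemma KP {M : ℕ} (hM : 2 ≤ M) {x y : ℝ} (hx : 0 < x) (hxy : x ≤ y) :
    G M x * G (M+1) y ≤ G (M+1) x * G M y := by
  have hy : 0 < y := lt_of_lt_of_le hx hxy
  have sMx := summable_G hM hx
  have sM1x := summable_G (le_trans hM (Nat.le_succ M)) hx
  have sMy := summable_G hM hy
  have sM1y := summable_G (le_trans hM (Nat.le_succ M)) hy
  have nMx : ∀ n : ℕ, 0 ≤ 1 / ((n:ℝ)+x)^M := fun n => (term_pos hx n).le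
  have nM1x : ∀ n : ℕ, 0 ≤ 1 / ((n:ℝ)+x)^(M+1) := fun n => (term_pos hx n).le
  have nMy : ∀ n : ℕ, 0 ≤ 1 / ((n:ℝ)+y)^M := fun n => (term_pos hy n).le
  have nM1y : ∀ n : ℕ, 0 ≤ 1 / ((n:ℝ)+y)^(M+1) := fun n => (term_pos hy n).le
  have hGsum : Summable (fun p : ℕ × ℕ => 1/((p.1:ℝ)+x)^M * (1/((p.2:ℝ)+y)^(M+1))) :=
    sMx.mul_of_nonneg sM1y nMx nM1y
  have hFsum : Summable (fun p : ℕ × ℕ => 1/((p.1:ℝ)+x)^(M+1) * (1/((p.2:ℝ)+y)^M)) :=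
    sM1x.mul_of_nonneg sMy nM1x nMy
  rw [G, G, G, G, Summable.tsum_mul_tsum sMx sM1y hGsum, Summable.tsum_mul_tsum sM1x sMy hFsum]
  set F : ℕ × ℕ → ℝ := fun p => 1/((p.1:ℝ)+x)^(M+1) * (1/((p.2:ℝ)+y)^M) with hF
  set Gf : ℕ × ℕ → ℝ := fun p => 1/((p.1:ℝ)+x)^M * (1/((p.2:ℝ)+y)^(M+1)) with hGf
  have hFs' : Summable (fun p : ℕ × ℕ => F p.swap) :=
    ((Equiv.prodComm ℕ ℕ).summable_iff (f := F)).mpr hFsum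
  have hGs' : Summable (fun p : ℕ × ℕ => Gf p.swap) :=
    ((Equiv.prodComm ℕ ℕ).summable_iff (f := Gf)).mpr hGsum
  have hswapF : ∑' p : ℕ × ℕ, F p.swap = ∑' p, F p := (Equiv.prodComm ℕ ℕ).tsum_eq F
  have hswapG : ∑' p : ℕ × ℕ, Gf p.swap = ∑' p, Gf p := (Equiv.prodComm ℕ ℕ).tsum_eq Gf
  have h2 : ∑' p : ℕ × ℕ, (Gf p + Gf p.swap) ≤ ∑' p : ℕ × ℕ, (F p + F p.swap) := by
    apply Summable.tsum_le_tsum _ (hGsum.add hGs') (hFsum.add hFs')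
    intro p
    exact pair_ineq M hx hxy p.1 p.2
  rw [Summable.tsum_add hGsum hGs', Summable.tsum_add hFsum hFs', hswapF, hswapG] at h2
  linarith

lemma ratio_antitone {M : ℕ} (hM : 2 ≤ M) {α β : ℝ} (hα : 0 < α) (hαβ : α ≤ β) :
    AntitoneOn (fun t => G M (α + t) / G M (β + t)) (Icc (0:ℝ) 1) := by
  have hβ : 0 < β := lt_of_lt_of_le hα hαβ
  have hd : ∀ t ∈ Icc (0:ℝ) 1, HasDerivAt (fun t => G M (α + t) / G M (β + t))
      ((-(M:ℝ) * G (M+1) (α+t) * G M (β+t) - G M (α+t) * (-(M:ℝ) * G (M+1) (β+t)))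
        / (G M (β+t))^2) t := by
    intro t ht
    have hat : 0 < α + t := by linarith [ht.1]
    have hbt : 0 < β + t := by linarith [ht.1]
    have h1 : HasDerivAt (fun t => G M (α + t)) (-(M:ℝ) * G (M+1) (α+t)) t := by
      have := (hasDerivAt_G hM hat).comp t ((hasDerivAt_id t).const_add α)
      simpa [Function.comp_def] using this
    have h2 : HasDerivAt (fun t => G M (β + t)) (-(M:ℝ) * G (M+1) (β+t)) t := by
      have := (hasDerivAt_G hM hbt).comp t ((hasDerivAt_id t).const_add β)
      simpa [Function.comp_def] using this
    exact h1.div h2 (G_pos hM hbt).ne'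
  apply antitoneOn_of_deriv_nonpos (convex_Icc 0 1)
  · exact fun t ht => ((hd t ht).continuousAt).continuousWithinAt
  · intro t ht
    rw [interior_Icc] at ht
    exact ((hd t (Ioo_subset_Icc_self ht)).differentiableAt).differentiableWithinAt
  · intro t ht
    rw [interior_Icc] at ht
    have ht' : t ∈ Icc (0:ℝ) 1 := Ioo_subset_Icc_self ht
    rw [(hd t ht').deriv]
    apply div_nonpos_of_nonpos_of_nonneg _ (sq_nonneg _)
    have hat : 0 < α + t := by linarith [ht'.1]
    have hbt : 0 < β + t := by linarith [ht'.1]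
    have hk := KP hM hat (by linarith : α + t ≤ β + t)
    nlinarith [mul_le_mul_of_nonneg_left hk (Nat.cast_nonneg (α := ℝ) M)]

theorem V_bounds (m : ℕ) (hm : 0 < m) (hodd : Odd m) (α β : ℝ)
    (hα : 0 < α) (hαβ : α ≤ β) (t : ℝ) (ht : t ∈ Set.Icc (0 : ℝ) 1) :
    iteratedDeriv m psi α / iteratedDeriv m psi β ≥
        iteratedDeriv m psi (α + t) / iteratedDeriv m psi (β + t) ∧
      iteratedDeriv m psi (α + t) / iteratedDeriv m psi (β + t) ≥
        iteratedDeriv m psi (α + 1) / iteratedDeriv m psi (β + 1) := by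
  obtain ⟨ht0, ht1⟩ := ht
  have hβ : 0 < β := lt_of_lt_of_le hα hαβ
  have hM : 2 ≤ m + 1 := by omega
  have hfac : (m.factorial : ℝ) ≠ 0 := Nat.cast_ne_zero.mpr m.factorial_ne_zero
  have hfe : ∀ z : ℝ, 0 < z → iteratedDeriv m psi z = (m.factorial : ℝ) * G (m+1) z := by
    intro z hz
    rw [iteratedDeriv_psi m hm z hz, (hodd.add_one).neg_one_pow, one_mul]
  have req : ∀ t' : ℝ, 0 ≤ t' →
      iteratedDeriv m psi (α+t') / iteratedDeriv m psi (β+t') = G (m+1) (α+t') / G (m+1) (β+t') := by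
    intro t' ht'
    rw [hfe _ (by linarith), hfe _ (by linarith), mul_div_mul_left _ _ hfac]
  have hAnti := ratio_antitone hM hα hαβ
  have h0m : (0:ℝ) ∈ Icc (0:ℝ) 1 := ⟨le_refl 0, zero_le_one⟩
  have h1m : (1:ℝ) ∈ Icc (0:ℝ) 1 := ⟨zero_le_one, le_refl 1⟩
  have htm : t ∈ Icc (0:ℝ) 1 := ⟨ht0, ht1⟩
  have g0 : iteratedDeriv m psi α / iteratedDeriv m psi β = G (m+1) (α+0) / G (m+1) (β+0) := by
    rw [add_zero, add_zero, hfe α hα, hfe β hβ, mul_div_mul_left _ _ hfac]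
  constructor
  · rw [g0, req t ht0]
    exact hAnti h0m htm ht0
  · rw [req t ht0, req 1 zero_le_one]
    exact hAnti htm h1m ht1
end
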